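/- Let T > 0, C > 0, let g : [0,T] → [0,∞) be integrable, and let f : [0,T] → ℝ be absolutely continuous with f(t) ≥ e for all t ∈ [0,T] and f'(t) ≤ C g(t) f(t) log f(t) + C g(t) f(t) + C g(t) for almost every t ∈ (0,T). Then f(T) ≤ exp( (1 + log f(0)) · exp(2C ∫₀^T g(s) ds) ). -/

import Mathlib

open MeasureTheory Set


lemma triangle_swap {t : ℝ} (A B : ℝ → ℝ)
    (hA : IntegrableOn A (Ioc 0 t)) (hB : IntegrableOn B (Ioc 0 t)) :
    ∫ s in Ioc (0:ℝ) t, A s * ∫ r in Ioc (0:ℝ) s, B r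
      = ∫ r in Ioc (0:ℝ) t, B r * ∫ s in Ioc r t, A s := by
  set μ := volume.restrict (Ioc (0:ℝ) t) with hμ
  set F : ℝ × ℝ → ℝ := ({p : ℝ × ℝ | p.2 ≤ p.1}).indicator (fun p => A p.1 * B p.2) with hF
  have hmeas : MeasurableSet {p : ℝ × ℝ | p.2 ≤ p.1} :=
    (isClosed_le continuous_snd continuous_fst).measurableSet
  have hFi : Integrable F (μ.prod μ) := by
    have h1 : Integrable (fun p : ℝ × ℝ => A p.1 * B p.2) (μ.prod μ) :=
      Integrable.mul_prod hA hB
    exact h1.indicator hmeas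
  have swap := MeasureTheory.integral_integral_swap (f := fun s r => F (s, r)) hFi
  have lhs : (∫ s, ∫ r, F (s, r) ∂μ ∂μ) = ∫ s in Ioc (0:ℝ) t, A s * ∫ r in Ioc (0:ℝ) s, B r := by
    apply setIntegral_congr_fun measurableSet_Ioc
    intro s hs
    show (∫ r, F (s, r) ∂μ) = A s * ∫ r in Ioc (0:ℝ) s, B r
    have : (fun r => F (s, r)) = (Iic s).indicator (fun r => A s * B r) := by
      ext r
      simp only [hF, indicator, mem_setOf_eq, mem_Iic]
    rw [this, setIntegral_indicator measurableSet_Iic]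
    have : Ioc (0:ℝ) t ∩ Iic s = Ioc 0 s := by
      rw [Ioc_inter_Iic, min_eq_right hs.2]
    rw [this, integral_const_mul]
  have rhs : (∫ r, ∫ s, F (s, r) ∂μ ∂μ) = ∫ r in Ioc (0:ℝ) t, B r * ∫ s in Ioc r t, A s := by
    apply setIntegral_congr_fun measurableSet_Ioc
    intro r hr
    show (∫ s, F (s, r) ∂μ) = B r * ∫ s in Ioc r t, A s
    have h1 : (fun s => F (s, r)) = (Ici r).indicator (fun s => A s * B r) := by
      ext s
      simp only [hF, indicator, mem_setOf_eq, mem_Ici]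
    rw [h1, setIntegral_indicator measurableSet_Ici]
    have h2 : Ioc (0:ℝ) t ∩ Ici r = Icc r t := by
      ext x
      simp only [mem_inter_iff, mem_Ioc, mem_Ici, mem_Icc]
      constructor
      · rintro ⟨⟨_, hxt⟩, hrx⟩; exact ⟨hrx, hxt⟩
      · rintro ⟨hrx, hxt⟩; exact ⟨⟨lt_of_lt_of_le hr.1 hrx, hxt⟩, hrx⟩
    rw [h2, integral_Icc_eq_integral_Ioc]
    rw [show (fun s => A s * B r) = fun s => B r * A s by ext s; ring, integral_const_mul]
  rw [← lhs, ← rhs, swap]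

lemma primitive_pow_int {T : ℝ} (hT : 0 ≤ T) (k : ℝ → ℝ) (hk : IntegrableOn k (Icc 0 T))
    (n : ℕ) {t : ℝ} (ht : t ∈ Icc (0:ℝ) T) :
    IntegrableOn (fun s => k s * (∫ r in Ioc (0:ℝ) s, k r) ^ n) (Ioc 0 t) := by
  have hki : IntervalIntegrable k volume 0 T := by
    rw [intervalIntegrable_iff_integrableOn_Ioc_of_le hT]
    exact hk.mono_set Ioc_subset_Icc_self
  have hKc : ContinuousOn (fun s => (∫ r in Ioc (0:ℝ) s, k r) ^ n) (Icc 0 T) :=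
    (intervalIntegral.continuousOn_primitive hk).pow n
  have := hki.mul_continuousOn (by rwa [uIcc_of_le hT])
  rw [intervalIntegrable_iff_integrableOn_Ioc_of_le hT] at this
  exact this.mono_set (Ioc_subset_Ioc le_rfl ht.2)

lemma primitive_pow_id {T : ℝ} (hT : 0 ≤ T) (k : ℝ → ℝ) (hk : IntegrableOn k (Icc 0 T)) :
    ∀ (n : ℕ), ∀ t ∈ Icc (0:ℝ) T,
      ∫ s in Ioc (0:ℝ) t, k s * (∫ r in Ioc (0:ℝ) s, k r) ^ n
        = (∫ s in Ioc (0:ℝ) t, k s) ^ (n + 1) / (n + 1) := by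
  set K : ℝ → ℝ := fun s => ∫ r in Ioc (0:ℝ) s, k r with hK
  intro n
  induction n with
  | zero =>
    intro t ht
    simp
  | succ n ih =>
    intro t ht
    have hsub : ∀ x, x ∈ Icc (0:ℝ) t → x ∈ Icc (0:ℝ) T := fun x hx =>
      ⟨hx.1, hx.2.trans ht.2⟩
    have hkt : IntegrableOn k (Ioc 0 t) :=
      hk.mono_set ((Ioc_subset_Ioc le_rfl ht.2).trans Ioc_subset_Icc_self)
    have hAint : IntegrableOn (fun s => k s * K s ^ n) (Ioc 0 t) :=
      primitive_pow_int hT k hk n ht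
    have hAint' : IntegrableOn (fun s => k s * K s ^ (n+1)) (Ioc 0 t) :=
      primitive_pow_int hT k hk (n+1) ht
    have step1 : (∫ s in Ioc (0:ℝ) t, k s * K s ^ (n+1))
        = ∫ s in Ioc (0:ℝ) t, (k s * K s ^ n) * K s := by
      apply setIntegral_congr_fun measurableSet_Ioc
      intro s _
      ring
    have step2 : (∫ s in Ioc (0:ℝ) t, (k s * K s ^ n) * K s)
        = ∫ r in Ioc (0:ℝ) t, k r * ∫ s in Ioc r t, k s * K s ^ n :=
      triangle_swap (fun s => k s * K s ^ n) k hAint hkt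
    have split : ∀ r ∈ Ioc (0:ℝ) t,
        (∫ s in Ioc r t, k s * K s ^ n) = (∫ s in Ioc (0:ℝ) t, k s * K s ^ n)
          - ∫ s in Ioc (0:ℝ) r, k s * K s ^ n := by
      intro r hr
      have h1 : IntegrableOn (fun s => k s * K s ^ n) (Ioc 0 r) :=
        primitive_pow_int hT k hk n (hsub r ⟨hr.1.le, hr.2⟩)
      have h2 : IntegrableOn (fun s => k s * K s ^ n) (Ioc r t) :=
        hAint.mono_set (Ioc_subset_Ioc hr.1.le le_rfl)
      have hunion : Ioc (0:ℝ) r ∪ Ioc r t = Ioc 0 t := Ioc_union_Ioc_eq_Ioc hr.1.le hr.2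
      have hdisj : Disjoint (Ioc (0:ℝ) r) (Ioc r t) := Ioc_disjoint_Ioc_of_le le_rfl
      have := setIntegral_union hdisj measurableSet_Ioc h1 h2 (f := fun s => k s * K s ^ n)
      rw [hunion] at this
      linarith [this]
    have step3 : (∫ r in Ioc (0:ℝ) t, k r * ∫ s in Ioc r t, k s * K s ^ n)
        = ∫ r in Ioc (0:ℝ) t, (k r * (K t ^ (n+1) / (n+1)) - k r * (K r ^ (n+1) / (n+1))) := by
      apply setIntegral_congr_fun measurableSet_Ioc
      intro r hr
      show k r * (∫ s in Ioc r t, k s * K s ^ n)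
          = k r * (K t ^ (n+1) / (n+1)) - k r * (K r ^ (n+1) / (n+1))
      rw [split r hr, ih t ht, ih r (hsub r ⟨hr.1.le, hr.2⟩)]
      ring
    have hint2 : IntegrableOn (fun r => k r * (K r ^ (n+1) / (n+1))) (Ioc 0 t) := by
      have h : IntegrableOn (fun r => (k r * K r ^ (n+1)) / ((n:ℝ)+1)) (Ioc 0 t) :=
        hAint'.div_const _
      simp only [mul_div_assoc] at h
      exact h
    have step4 : (∫ r in Ioc (0:ℝ) t, (k r * (K t ^ (n+1) / (n+1)) - k r * (K r ^ (n+1) / (n+1))))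
        = (∫ r in Ioc (0:ℝ) t, k r) * (K t ^ (n+1) / (n+1))
          - (∫ r in Ioc (0:ℝ) t, k r * K r ^ (n+1)) / (n+1) := by
      rw [integral_sub (hkt.mul_const _) hint2, integral_mul_const]
      congr 1
      simp_rw [← mul_div_assoc]
      rw [integral_div]
    have hn1 : ((n:ℝ) + 1) ≠ 0 := by positivity
    have hn2 : ((n:ℝ) + 2) ≠ 0 := by positivity
    have key : (∫ s in Ioc (0:ℝ) t, k s * K s ^ (n+1))
        = K t ^ (n+2) / (n+1) - (∫ s in Ioc (0:ℝ) t, k s * K s ^ (n+1)) / (n+1) := by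
      conv_lhs => rw [step1, step2, step3, step4]
      have hKt : (∫ r in Ioc (0:ℝ) t, k r) = K t := rfl
      rw [hKt]
      ring
    have hI : (∫ s in Ioc (0:ℝ) t, k s * K s ^ (n+1)) = K t ^ (n+2) / (n+2) := by
      set I := ∫ s in Ioc (0:ℝ) t, k s * K s ^ (n+1) with hIdef
      field_simp at key ⊢
      linarith [key]
    show (∫ s in Ioc (0:ℝ) t, k s * K s ^ (n+1)) = K t ^ (n+1+1) / (↑(n+1) + 1)
    rw [hI]
    push_cast
    ring_nf

lemma integrable_mul_cont {T : ℝ} (hT : 0 ≤ T) (k φ : ℝ → ℝ)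
    (hk : IntegrableOn k (Icc 0 T)) (hφ : ContinuousOn φ (Icc 0 T))
    {t : ℝ} (ht : t ∈ Icc (0:ℝ) T) :
    IntegrableOn (fun s => k s * φ s) (Ioc 0 t) := by
  have hki : IntervalIntegrable k volume 0 T := by
    rw [intervalIntegrable_iff_integrableOn_Ioc_of_le hT]
    exact hk.mono_set Ioc_subset_Icc_self
  have := hki.mul_continuousOn (by rwa [uIcc_of_le hT])
  rw [intervalIntegrable_iff_integrableOn_Ioc_of_le hT] at this
  exact this.mono_set (Ioc_subset_Ioc le_rfl ht.2)

lemma gronwall_integral {T : ℝ} (hT : 0 ≤ T) (k u : ℝ → ℝ) (a : ℝ) (ha : 0 ≤ a)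
    (hk : IntegrableOn k (Icc 0 T)) (hk0 : ∀ s ∈ Icc (0:ℝ) T, 0 ≤ k s)
    (hu : ContinuousOn u (Icc 0 T))
    (h : ∀ t ∈ Icc (0:ℝ) T, u t ≤ a + ∫ s in Ioc (0:ℝ) t, k s * u s) :
    ∀ t ∈ Icc (0:ℝ) T, u t ≤ a * Real.exp (∫ s in Ioc (0:ℝ) t, k s) := by
  set K : ℝ → ℝ := fun s => ∫ r in Ioc (0:ℝ) s, k r with hKdef
  have hKc : ContinuousOn K (Icc 0 T) := intervalIntegral.continuousOn_primitive hk
  obtain ⟨M₀, hM₀⟩ := isCompact_Icc.exists_bound_of_continuousOn hu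
  set M : ℝ := max M₀ 0 with hMdef
  have hM0 : 0 ≤ M := le_max_right _ _
  have hMu : ∀ s ∈ Icc (0:ℝ) T, u s ≤ M := fun s hs =>
    (le_abs_self _).trans ((hM₀ s hs).trans (le_max_left _ _))
  have hK0 : ∀ t ∈ Icc (0:ℝ) T, 0 ≤ K t := by
    intro t ht
    exact setIntegral_nonneg measurableSet_Ioc fun s hs =>
      hk0 s ⟨hs.1.le, hs.2.trans ht.2⟩
  -- main induction
  have main : ∀ n : ℕ, ∀ t ∈ Icc (0:ℝ) T,
      u t ≤ a * (∑ j ∈ Finset.range n, K t ^ j / (j.factorial : ℝ))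
        + M * (K t ^ n / (n.factorial : ℝ)) := by
    intro n
    induction n with
    | zero =>
      intro t ht
      simpa using hMu t ht
    | succ n ih =>
      intro t ht
      have hsub : ∀ s, s ∈ Ioc (0:ℝ) t → s ∈ Icc (0:ℝ) T := fun s hs =>
        ⟨hs.1.le, hs.2.trans ht.2⟩
      set Φ : ℝ → ℝ := fun s =>
        a * (∑ j ∈ Finset.range n, K s ^ j / (j.factorial : ℝ))
          + M * (K s ^ n / (n.factorial : ℝ)) with hΦdef
      have hΦc : ContinuousOn Φ (Icc 0 T) := by
        apply ContinuousOn.add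
        · exact continuousOn_const.mul
            (continuousOn_finset_sum _ fun j _ => (hKc.pow j).div_const _)
        · exact continuousOn_const.mul ((hKc.pow n).div_const _)
      have hkuint : IntegrableOn (fun s => k s * u s) (Ioc 0 t) :=
        integrable_mul_cont hT k u hk hu ht
      have hkΦint : IntegrableOn (fun s => k s * Φ s) (Ioc 0 t) :=
        integrable_mul_cont hT k Φ hk hΦc ht
      have hGint : ∀ j : ℕ, IntegrableOn (fun s => k s * K s ^ j) (Ioc 0 t) := fun j =>
        integrable_mul_cont hT k _ hk (hKc.pow j) ht
      have step1 : u t ≤ a + ∫ s in Ioc (0:ℝ) t, k s * Φ s := by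
        refine (h t ht).trans (add_le_add_right ?_ a)
        apply setIntegral_mono_on hkuint hkΦint measurableSet_Ioc
        intro s hs
        exact mul_le_mul_of_nonneg_left (ih s (hsub s hs)) (hk0 s (hsub s hs))
      have e1 : (fun s => k s * Φ s)
          = fun s => (∑ j ∈ Finset.range n, (a / (j.factorial : ℝ)) * (k s * K s ^ j))
            + (M / (n.factorial : ℝ)) * (k s * K s ^ n) := by
        funext s
        simp only [hΦdef, Finset.mul_sum, mul_add]
        congr 1
        · exact Finset.sum_congr rfl fun j _ => by ring
        · ring
      have e2 : (∫ s in Ioc (0:ℝ) t, k s * Φ s)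
          = (∑ j ∈ Finset.range n, (a / (j.factorial : ℝ)) * (K t ^ (j+1) / (j+1)))
            + (M / (n.factorial : ℝ)) * (K t ^ (n+1) / (n+1)) := by
        rw [e1, integral_add (integrable_finset_sum _ fun j _ => (hGint j).const_mul _)
          ((hGint n).const_mul _)]
        rw [integral_finset_sum _ fun j _ => (hGint j).const_mul _]
        congr 1
        · refine Finset.sum_congr rfl fun j _ => ?_
          rw [integral_const_mul, primitive_pow_id hT k hk j t ht]
        · rw [integral_const_mul, primitive_pow_id hT k hk n t ht]
      have hterm : ∀ j : ℕ, (a / (j.factorial : ℝ)) * (K t ^ (j+1) / (j+1))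
          = a * (K t ^ (j+1) / ((j+1).factorial : ℝ)) := by
        intro j
        have hfact : (((j+1).factorial : ℝ)) = ((j:ℝ)+1) * (j.factorial:ℝ) := by
          rw [Nat.factorial_succ]; push_cast; ring
        rw [hfact, div_mul_div_comm, ← mul_div_assoc, mul_comm ((j:ℝ)+1) ((j.factorial:ℝ))]
      have hterm2 : (M / (n.factorial : ℝ)) * (K t ^ (n+1) / (n+1))
          = M * (K t ^ (n+1) / ((n+1).factorial : ℝ)) := by
        have hfact : (((n+1).factorial : ℝ)) = ((n:ℝ)+1) * (n.factorial:ℝ) := by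
          rw [Nat.factorial_succ]; push_cast; ring
        rw [hfact, div_mul_div_comm, ← mul_div_assoc, mul_comm ((n:ℝ)+1) ((n.factorial:ℝ))]
      have hsum : ∑ j ∈ Finset.range n, (a / (j.factorial : ℝ)) * (K t ^ (j+1) / (j+1))
          = ∑ j ∈ Finset.range n, a * (K t ^ (j+1) / ((j+1).factorial : ℝ)) :=
        Finset.sum_congr rfl fun j _ => hterm j
      have e3 : a + ((∑ j ∈ Finset.range n, (a / (j.factorial : ℝ)) * (K t ^ (j+1) / (j+1)))
            + (M / (n.factorial : ℝ)) * (K t ^ (n+1) / (n+1)))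
          = a * (∑ j ∈ Finset.range (n+1), K t ^ j / (j.factorial : ℝ))
            + M * (K t ^ (n+1) / ((n+1).factorial : ℝ)) := by
        rw [hsum, hterm2, Finset.sum_range_succ', mul_add, Finset.mul_sum]
        norm_num
        ring
      calc u t ≤ a + ∫ s in Ioc (0:ℝ) t, k s * Φ s := step1
        _ = _ := by rw [e2, e3]
  -- pass to the limit
  intro t ht
  have hKt0 : 0 ≤ K t := hK0 t ht
  have hsum : ∀ n : ℕ, u t ≤ a * Real.exp (K t) + M * (K t ^ n / (n.factorial : ℝ)) := by
    intro n
    refine (main n t ht).trans (add_le_add_left ?_ _)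
    exact mul_le_mul_of_nonneg_left (Real.sum_le_exp_of_nonneg hKt0 n) ha
  have hlim : Filter.Tendsto (fun n : ℕ => a * Real.exp (K t) + M * (K t ^ n / (n.factorial : ℝ)))
      Filter.atTop (nhds (a * Real.exp (K t) + M * 0)) :=
    Filter.Tendsto.add tendsto_const_nhds
      ((FloorSemiring.tendsto_pow_div_factorial_atTop (K t)).const_mul M)
  have := ge_of_tendsto' hlim hsum
  simpa using this

/-- Logarithmic Gronwall inequality: if `f ≥ e` is absolutely continuous on `[0,T]`
(expressed via the fundamental theorem of calculus with an integrable a.e. derivative `f'`)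
and `f' ≤ C g f log f + C g f + C g` a.e. with `g ≥ 0` integrable, then
`f(T) ≤ exp((1 + log f(0)) · exp(2C ∫₀^T g))`. -/
theorem log_gronwall
    (T C : ℝ) (hT : 0 < T) (hC : 0 < C)
    (g : ℝ → ℝ) (hg : IntegrableOn g (Icc 0 T))
    (hgpos : ∀ t ∈ Icc (0:ℝ) T, 0 ≤ g t)
    (f f' : ℝ → ℝ)
    (hfe : ∀ t ∈ Icc (0:ℝ) T, Real.exp 1 ≤ f t)
    (hf'int : IntegrableOn f' (Icc 0 T))
    -- absolute continuity: `f(t) = f(0) + ∫₀ᵗ f'`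
    (hftc : ∀ t ∈ Icc (0:ℝ) T, f t = f 0 + ∫ s in (0:ℝ)..t, f' s)
    -- the differential inequality, a.e. on `(0,T)`
    (hineq : ∀ᵐ t ∂(volume.restrict (Ioo (0:ℝ) T)),
      f' t ≤ C * g t * f t * Real.log (f t) + C * g t * f t + C * g t) :
    f T ≤ Real.exp ((1 + Real.log (f 0)) * Real.exp (2 * C * ∫ s in (0:ℝ)..T, g s)) := by
  have hT0 : (0:ℝ) ≤ T := hT.le
  have h0mem : (0:ℝ) ∈ Icc (0:ℝ) T := ⟨le_rfl, hT0⟩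
  have hTmem : T ∈ Icc (0:ℝ) T := ⟨hT0, le_rfl⟩
  have hfpos : ∀ t ∈ Icc (0:ℝ) T, 0 < f t := fun t ht =>
    lt_of_lt_of_le (Real.exp_pos 1) (hfe t ht)
  have hlog1 : ∀ t ∈ Icc (0:ℝ) T, 1 ≤ Real.log (f t) := by
    intro t ht
    have := Real.log_le_log (Real.exp_pos 1) (hfe t ht)
    rwa [Real.log_exp] at this
  -- continuity of f on [0,T]
  have hfc : ContinuousOn f (Icc 0 T) := by
    have hprim : ContinuousOn (fun t => f 0 + ∫ s in (0:ℝ)..t, f' s) (Icc 0 T) := by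
      apply continuousOn_const.add
      have := intervalIntegral.continuousOn_primitive_interval
        (μ := volume) (a := (0:ℝ)) (b := T) (f := f') (by rwa [uIcc_of_le hT0])
      rwa [uIcc_of_le hT0] at this
    exact hprim.congr fun t ht => hftc t ht
  set u : ℝ → ℝ := fun t => 1 + Real.log (f t) with hudef
  have huc : ContinuousOn u (Icc 0 T) :=
    continuousOn_const.add (hfc.log fun t ht => (hfpos t ht).ne')
  have hu2 : ∀ t ∈ Icc (0:ℝ) T, 2 ≤ u t := fun t ht => by
    have := hlog1 t ht; simp only [hudef]; linarith
  set k₁ : ℝ → ℝ := fun s => 2 * C * g s * u s with hk₁def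
  have hk₁int : IntegrableOn k₁ (Icc 0 T) := by
    have : IntegrableOn (fun s => 2 * C * g s) (Icc 0 T) := hg.const_mul (2 * C)
    exact this.mul_continuousOn_of_subset huc measurableSet_Icc isCompact_Icc Subset.rfl
  have hk₁0 : ∀ s ∈ Icc (0:ℝ) T, 0 ≤ k₁ s := by
    intro s hs
    have h1 := hgpos s hs
    have h2 := hu2 s hs
    have : (0:ℝ) ≤ 2 * C * g s := by positivity
    exact mul_nonneg this (by linarith)
  -- stage 1: integral inequality for f
  have stage1 : ∀ t ∈ Icc (0:ℝ) T, f t ≤ f 0 + ∫ s in Ioc (0:ℝ) t, k₁ s * f s := by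
    intro t ht
    rw [hftc t ht, intervalIntegral.integral_of_le ht.1]
    apply add_le_add_right
    have hf'i : IntegrableOn f' (Ioc 0 t) :=
      hf'int.mono_set ((Ioc_subset_Ioc le_rfl ht.2).trans Ioc_subset_Icc_self)
    have hk₁fi : IntegrableOn (fun s => k₁ s * f s) (Ioc 0 t) := by
      have := (hk₁int.mono_set (Set.Ioc_subset_Icc_self.trans
        (Icc_subset_Icc le_rfl ht.2))).mul_continuousOn_of_subset
        (hfc.mono (Icc_subset_Icc le_rfl ht.2)) measurableSet_Ioc isCompact_Icc
        Ioc_subset_Icc_self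
      exact this
    apply setIntegral_mono_ae_restrict hf'i hk₁fi
    -- a.e. inequality on Ioc 0 t
    have hIoo : (volume.restrict (Ioc (0:ℝ) t)) = volume.restrict (Ioo (0:ℝ) t) :=
      (Measure.restrict_congr_set Ioo_ae_eq_Ioc).symm
    rw [Filter.EventuallyLE, hIoo]
    have hsub : Ioo (0:ℝ) t ⊆ Ioo 0 T := Ioo_subset_Ioo le_rfl ht.2
    have hineq' : ∀ᵐ s ∂(volume.restrict (Ioo (0:ℝ) t)),
        f' s ≤ C * g s * f s * Real.log (f s) + C * g s * f s + C * g s :=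
      ae_restrict_of_ae_restrict_of_subset hsub hineq
    filter_upwards [hineq', ae_restrict_mem measurableSet_Ioo] with s hs hmem
    have hsmem : s ∈ Icc (0:ℝ) T := ⟨hmem.1.le, hmem.2.le.trans ht.2⟩
    have hgs := hgpos s hsmem
    have hfs : (1:ℝ) ≤ f s := le_trans (by
      have := Real.add_one_le_exp (1:ℝ); linarith) (hfe s hsmem)
    have hls := hlog1 s hsmem
    have hCg : 0 ≤ C * g s := mul_nonneg hC.le hgs
    calc f' s ≤ C * g s * f s * Real.log (f s) + C * g s * f s + C * g s := hs
      _ ≤ 2 * C * g s * (1 + Real.log (f s)) * f s := by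
          nlinarith [mul_nonneg hCg (sub_nonneg.2 hfs),
            mul_nonneg (mul_nonneg hCg (le_trans zero_le_one hfs)) (le_trans zero_le_one hls)]
      _ = k₁ s * f s := by simp only [hk₁def, hudef]
  -- apply Gronwall to f
  have hf0 : 0 ≤ f 0 := (hfpos 0 h0mem).le
  have bound1 := gronwall_integral hT0 k₁ f (f 0) hf0 hk₁int hk₁0 hfc stage1
  -- stage 2: integral inequality for u
  set k₂ : ℝ → ℝ := fun s => 2 * C * g s with hk₂def
  have hk₂int : IntegrableOn k₂ (Icc 0 T) := hg.const_mul (2 * C)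
  have hk₂0 : ∀ s ∈ Icc (0:ℝ) T, 0 ≤ k₂ s := fun s hs => by
    have := hgpos s hs; simp only [hk₂def]; positivity
  have stage2 : ∀ t ∈ Icc (0:ℝ) T, u t ≤ (1 + Real.log (f 0)) + ∫ s in Ioc (0:ℝ) t, k₂ s * u s := by
    intro t ht
    have h1 := bound1 t ht
    have h2 : Real.log (f t) ≤ Real.log (f 0) + ∫ s in Ioc (0:ℝ) t, k₁ s := by
      have h3 := Real.log_le_log (hfpos t ht) h1
      rwa [Real.log_mul (hfpos 0 h0mem).ne' (Real.exp_ne_zero _), Real.log_exp] at h3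
    have h4 : (∫ s in Ioc (0:ℝ) t, k₁ s) = ∫ s in Ioc (0:ℝ) t, k₂ s * u s := by
      apply setIntegral_congr_fun measurableSet_Ioc
      intro s _
      simp only [hk₁def, hk₂def]
    simp only [hudef]
    rw [← h4]
    linarith
  have hlog0 : 1 ≤ Real.log (f 0) := hlog1 0 h0mem
  have bound2 := gronwall_integral hT0 k₂ u (1 + Real.log (f 0)) (by linarith)
    hk₂int hk₂0 huc stage2 T hTmem
  -- conclude
  have hKT : (∫ s in Ioc (0:ℝ) T, k₂ s) = 2 * C * ∫ s in (0:ℝ)..T, g s := by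
    rw [intervalIntegral.integral_of_le hT0]
    simp only [hk₂def]
    rw [integral_const_mul]
  rw [hKT] at bound2
  have hlogT : Real.log (f T)
      ≤ (1 + Real.log (f 0)) * Real.exp (2 * C * ∫ s in (0:ℝ)..T, g s) := by
    have : u T = 1 + Real.log (f T) := rfl
    rw [this] at bound2
    linarith
  calc f T = Real.exp (Real.log (f T)) := (Real.exp_log (hfpos T hTmem)).symm
    _ ≤ _ := Real.exp_le_exp.2 hlogT
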